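/- Let (C; ≤) be a finite preorder, 𝒞 the 1-base of ≤-up subsets of C, k ≥ 2, and A : C → {0,…,k−1}. For any finite {0,…,k−1}-labeled forest F: A is determined by an F-family over 𝒞 if and only if every {0,…,k−1}-labeled tree T with T ≤_h (C; ≤, A) satisfies T ≤_h F. -/

import Mathlib

section Aux
variable {C : Type*}

lemma stmt13_getLastD_cons {α : Type*} {s : List α} (hs : s ≠ []) (a d d' : α) :
    (a :: s).getLastD d = s.getLastD d' := by
  cases s with
  | nil => exact absurd rfl hs
  | cons b l =>
    simp only [List.getLastD_cons]

lemma stmt13_getLastD_map {β : Type*} (e : C → β) {c : List C} (hc : c ≠ []) (d₁ : β) (d₂ : C) :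
    (c.map e).getLastD d₁ = e (c.getLastD d₂) := by
  induction c generalizing d₁ d₂ with
  | nil => exact absurd rfl hc
  | cons a l ih =>
    cases l with
    | nil => simp
    | cons b m => simpa using ih (by simp) d₁ d₂

lemma stmt13_getLastD_eq_getElem {α : Type*} {l : List α} (h : l ≠ []) (w : α) :
    l.getLastD w = l[l.length - 1]'(by
      have := List.length_pos_iff.mpr h; omega) := by
  rw [← List.getLast_eq_getElem]
  rw [List.getLastD_eq_getLast?, List.getLast?_eq_getLast h]
  rfl

lemma stmt13_le_of_prefix [Preorder C] {u v : List C} (h : u <+: v) (hc : u ≠ [])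
    (hch : List.Chain' (· ≤ ·) v) (w : C) : u.getLastD w ≤ v.getLastD w := by
  have hv : v ≠ [] := by
    rintro rfl; exact hc (List.prefix_nil.mp h)
  have hp : v.Pairwise (· ≤ ·) := List.isChain_iff_pairwise.mp hch
  have hl : u.length ≤ v.length := h.length_le
  have h1 : 0 < u.length := List.length_pos_iff.mpr hc
  rw [stmt13_getLastD_eq_getElem hc, stmt13_getLastD_eq_getElem hv]
  have hg : u[u.length - 1]'(by omega) = v[u.length - 1]'(by omega) := h.getElem _
  rw [hg]
  rcases eq_or_lt_of_le (Nat.sub_le_sub_right hl 1) with heq | hlt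
  · simp only [heq]; exact le_refl _
  · exact (List.pairwise_iff_getElem.mp hp) _ _ _ _ hlt

end Aux

noncomputable def stmt13psi (rlen : ℕ) (g0 : List ℕ) (g : List ℕ → List ℕ → List ℕ) :
    List ℕ → List ℕ := fun s =>
  if s.length ≤ rlen then g0 else g (stmt13psi rlen g0 g s.dropLast) s
termination_by s => s.length
decreasing_by simp only [List.length_dropLast]; omega

lemma stmt13psi_eq (rlen : ℕ) (g0 : List ℕ) (g : List ℕ → List ℕ → List ℕ) (s : List ℕ) :
    stmt13psi rlen g0 g s =
      if s.length ≤ rlen then g0 else g (stmt13psi rlen g0 g s.dropLast) s := by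
  rw [stmt13psi]


section TreeDef
variable {C : Type*} [Preorder C]

def stmt13CSeq (x : C) (N : ℕ) : Set (List C) :=
  {c | (∃ t, c = x :: t) ∧ List.Chain' (· ≤ ·) c ∧ c.length ≤ N + 1}

lemma stmt13CSeq_finite [Finite C] (x : C) (N : ℕ) : (stmt13CSeq x N).Finite :=
  (List.finite_length_le C (N + 1)).subset fun _ hc => hc.2.2

noncomputable def stmt13T [Finite C] (e : C → ℕ) (x : C) (N : ℕ) : Finset (List ℕ) :=
  ((stmt13CSeq_finite x N).image (List.map e)).toFinset

lemma mem_stmt13T [Finite C] (e : C → ℕ) (x : C) (N : ℕ) (s : List ℕ) :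
    s ∈ stmt13T e x N ↔ ∃ c ∈ stmt13CSeq x N, List.map e c = s := by
  simp [stmt13T, Set.Finite.mem_toFinset, Set.mem_image]

variable [Finite C] (e : C → ℕ) (d : ℕ → C)

def stmt13phi (d : ℕ → C) : List ℕ → C := fun s => d (s.getLastD 0)

variable {e}

lemma stmt13_root_mem (x : C) (N : ℕ) : [e x] ∈ stmt13T e x N := by
  rw [mem_stmt13T]
  exact ⟨[x], ⟨⟨[], rfl⟩, List.isChain_singleton x, by simp⟩, rfl⟩

lemma stmt13_root_prefix {x : C} {N : ℕ} {s : List ℕ} (hs : s ∈ stmt13T e x N) :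
    [e x] <+: s := by
  rw [mem_stmt13T] at hs
  obtain ⟨c, ⟨⟨t, rfl⟩, -, -⟩, rfl⟩ := hs
  exact ⟨List.map e t, rfl⟩

lemma stmt13_ne_nil {x : C} {N : ℕ} {s : List ℕ} (hs : s ∈ stmt13T e x N) : s ≠ [] := by
  rw [mem_stmt13T] at hs
  obtain ⟨c, ⟨⟨t, rfl⟩, -, -⟩, rfl⟩ := hs
  simp

lemma stmt13_subset {x : C} {N N' : ℕ} (h : N' ≤ N) :
    stmt13T e x N' ⊆ stmt13T e x N := by
  intro s hs
  rw [mem_stmt13T] at hs ⊢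
  obtain ⟨c, ⟨ht, hch, hlen⟩, rfl⟩ := hs
  exact ⟨c, ⟨ht, hch, hlen.trans (by omega)⟩, rfl⟩

lemma stmt13_prefix_mem {x : C} {N : ℕ} {s t : List ℕ} (hs : s ∈ stmt13T e x N)
    (ht : t <+: s) (htne : t ≠ []) : t ∈ stmt13T e x N := by
  rw [mem_stmt13T] at hs ⊢
  obtain ⟨c, ⟨⟨u, rfl⟩, hch, hlen⟩, rfl⟩ := hs
  have htake : t = List.map e ((x :: u).take t.length) := by
    rw [List.map_take]; exact List.prefix_iff_eq_take.mp ht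
  have h1 : 1 ≤ t.length := by
    have := List.length_pos_iff.mpr htne; omega
  obtain ⟨m, hm⟩ : ∃ m, t.length = m + 1 := ⟨t.length - 1, by omega⟩
  refine ⟨(x :: u).take t.length, ⟨⟨u.take m, by rw [hm]; simp⟩, ?_, ?_⟩, htake.symm⟩
  · exact hch.prefix (List.take_prefix _ _)
  · calc ((x :: u).take t.length).length ≤ (x :: u).length := by
          simp [List.length_take]
      _ ≤ N + 1 := hlen

lemma stmt13_prefix_of_prefix {x : C} {N : ℕ} {s t : List ℕ} (he : Function.Injective e)
    (hs : s ∈ stmt13T e x N) (ht : t ∈ stmt13T e x N) (hst : s <+: t) :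
    ∃ u v, u ∈ stmt13CSeq x N ∧ v ∈ stmt13CSeq x N ∧ s = List.map e u ∧ t = List.map e v
      ∧ u <+: v := by
  rw [mem_stmt13T] at hs ht
  obtain ⟨u, hu, rfl⟩ := hs
  obtain ⟨v, hv, rfl⟩ := ht
  refine ⟨u, v, hu, hv, rfl, rfl, ?_⟩
  have h1 : List.map e u = List.map e (v.take u.length) := by
    rw [List.map_take]
    simpa using List.prefix_iff_eq_take.mp hst
  have h2 : u = v.take u.length := List.map_injective_iff.mpr he h1
  rw [h2]; exact List.take_prefix _ _

end TreeDef
section PhiGood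
variable {C : Type*} [Preorder C] [Finite C] {e : C → ℕ} {d : ℕ → C}

lemma stmt13_phi_root (hd : ∀ y, d (e y) = y) (x : C) : stmt13phi d [e x] = x := by
  simp [stmt13phi, List.getLastD, hd]

lemma stmt13_phi_map (hd : ∀ y, d (e y) = y) {c : List C} (hc : c ≠ []) (w : C) :
    stmt13phi d (List.map e c) = c.getLastD w := by
  rw [stmt13phi, stmt13_getLastD_map e hc 0 w, hd]

lemma stmt13_phi_mono (he : Function.Injective e) (hd : ∀ y, d (e y) = y) {x : C} {N : ℕ}
    {s t : List ℕ} (hs : s ∈ stmt13T e x N) (ht : t ∈ stmt13T e x N) (hst : s <+: t) :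
    stmt13phi d s ≤ stmt13phi d t := by
  obtain ⟨u, v, hu, hv, rfl, rfl, huv⟩ := stmt13_prefix_of_prefix he hs ht hst
  obtain ⟨⟨u', rfl⟩, -, -⟩ := hu
  obtain ⟨⟨v', rfl⟩, hch, -⟩ := hv
  rw [stmt13_phi_map hd (by simp) x, stmt13_phi_map hd (by simp) x]
  exact stmt13_le_of_prefix huv (by simp) hch x

lemma stmt13_cons_mem {x y : C} (hxy : x ≤ y) {N : ℕ} {s : List ℕ}
    (hs : s ∈ stmt13T e y N) : e x :: s ∈ stmt13T e x (N + 1) := by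
  rw [mem_stmt13T] at hs ⊢
  obtain ⟨c, ⟨⟨t, rfl⟩, hch, hlen⟩, rfl⟩ := hs
  refine ⟨x :: y :: t, ⟨⟨y :: t, rfl⟩, ?_, by simpa using hlen⟩, rfl⟩
  exact List.isChain_cons_cons.mpr ⟨hxy, hch⟩

lemma stmt13_pair_mem {x y : C} (hxy : x ≤ y) (N : ℕ) : [e x, e y] ∈ stmt13T e x (N + 1) := by
  rw [mem_stmt13T]
  exact ⟨[x, y], ⟨⟨[y], rfl⟩, List.isChain_pair.mpr hxy, by simp⟩, rfl⟩

lemma stmt13_phi_cons {x : C} {N : ℕ} {s : List ℕ} (hs : s ∈ stmt13T e x N) (a : ℕ) :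
    stmt13phi d (a :: s) = stmt13phi d s := by
  rw [stmt13phi, stmt13phi, stmt13_getLastD_cons (stmt13_ne_nil hs) a 0 0]

variable (e d) in
def stmt13Good {k : ℕ} (F : Finset (List ℕ)) (cF : List ℕ → Fin k) (A : C → Fin k)
    (x : C) (N : ℕ) (σ : List ℕ) : Prop :=
  ∃ ψ : List ℕ → List ℕ, (∀ s ∈ stmt13T e x N, ψ s ∈ F) ∧
    (∀ s ∈ stmt13T e x N, ∀ t ∈ stmt13T e x N, s <+: t → ψ s <+: ψ t) ∧
    (∀ s ∈ stmt13T e x N, A (stmt13phi d s) = cF (ψ s)) ∧ σ <+: ψ [e x]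

variable {k : ℕ} {F : Finset (List ℕ)} {cF : List ℕ → Fin k} {A : C → Fin k}

lemma stmt13Good_prefix {x : C} {N : ℕ} {σ σ' : List ℕ} (hσ : σ' <+: σ)
    (h : stmt13Good e d F cF A x N σ) : stmt13Good e d F cF A x N σ' := by
  obtain ⟨ψ, h1, h2, h3, h4⟩ := h
  exact ⟨ψ, h1, h2, h3, hσ.trans h4⟩

lemma stmt13Good_antitone {x : C} {N N' : ℕ} (hN : N' ≤ N) {σ : List ℕ}
    (h : stmt13Good e d F cF A x N σ) : stmt13Good e d F cF A x N' σ := by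
  obtain ⟨ψ, h1, h2, h3, h4⟩ := h
  exact ⟨ψ, fun s hs => h1 s (stmt13_subset hN hs),
    fun s hs t ht => h2 s (stmt13_subset hN hs) t (stmt13_subset hN ht),
    fun s hs => h3 s (stmt13_subset hN hs), h4⟩

lemma stmt13Good_upper (he : Function.Injective e) (hd : ∀ y, d (e y) = y)
    {x y : C} (hxy : x ≤ y) {N : ℕ} {σ : List ℕ}
    (h : stmt13Good e d F cF A x (N + 1) σ) : stmt13Good e d F cF A y N σ := by
  obtain ⟨ψ, h1, h2, h3, h4⟩ := h
  refine ⟨fun s => ψ (e x :: s), fun s hs => h1 _ (stmt13_cons_mem hxy hs),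
    fun s hs t ht hst => h2 _ (stmt13_cons_mem hxy hs) _ (stmt13_cons_mem hxy ht)
      (by simpa using hst), fun s hs => ?_, ?_⟩
  · rw [← stmt13_phi_cons (d := d) hs (e x)]
    exact h3 _ (stmt13_cons_mem hxy hs)
  · refine h4.trans ?_
    have : [e x] <+: [e x, e y] := ⟨[e y], rfl⟩
    exact h2 _ (stmt13_root_mem x (N + 1)) _ (stmt13_pair_mem hxy N) this

end PhiGood

/-- A finite forest realized as a finite set of nonempty strings over `ℕ`,
closed under nonempty prefixes. -/
def IsForest (F : Finset (List ℕ)) : Prop :=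
  (∀ s ∈ F, s ≠ []) ∧ ∀ s ∈ F, ∀ t : List ℕ, t <+: s → t ≠ [] → t ∈ F

/-- A tree is a forest with a least element (root). -/
def IsTree (T : Finset (List ℕ)) : Prop :=
  IsForest T ∧ ∃ r ∈ T, ∀ s ∈ T, r <+: s

/-- The component `Ũ_τ = U_τ \ ⋃ { U_{τi} : τi ∈ F }` of an `F`-family. -/
def comp {C : Type*} (F : Finset (List ℕ)) (U : List ℕ → Set C) (τ : List ℕ) : Set C :=
  U τ \ ⋃ (i : ℕ) (_ : τ ++ [i] ∈ F), U (τ ++ [i])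

/-- For a finite preorder `C` and a `k`-partition `A : C → k̄`: `A` is determined by an
`F`-family of `≤`-up sets iff every `k`-labeled tree `T` with `T ≤_h (C; ≤, A)`
satisfies `T ≤_h F`. -/
theorem stmt13 {C : Type*} [Preorder C] [Finite C] {k : ℕ} (hk : 2 ≤ k)
    (A : C → Fin k) (F : Finset (List ℕ)) (cF : List ℕ → Fin k) (hF : IsForest F) :
    (∃ U : List ℕ → Set C, (∀ τ ∈ F, IsUpperSet (U τ)) ∧
        (∀ τ ∈ F, ∀ i : ℕ, τ ++ [i] ∈ F → U (τ ++ [i]) ⊆ U τ) ∧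
        (⋃ τ ∈ F, U τ) = Set.univ ∧
        (∀ τ ∈ F, ∀ x ∈ comp F U τ, A x = cF τ))
    ↔ (∀ (T : Finset (List ℕ)) (tT : List ℕ → Fin k), IsTree T →
        (∃ φ : List ℕ → C, (∀ s ∈ T, ∀ t ∈ T, s <+: t → φ s ≤ φ t) ∧
            ∀ s ∈ T, tT s = A (φ s)) →
        (∃ ψ : List ℕ → List ℕ, (∀ s ∈ T, ψ s ∈ F) ∧
            (∀ s ∈ T, ∀ t ∈ T, s <+: t → ψ s <+: ψ t) ∧
            ∀ s ∈ T, tT s = cF (ψ s))) := by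
  classical
  constructor
  · rintro ⟨U, hUp, hNest, hCov, hDet⟩ T tT hT ⟨φ, hmono, hlab⟩
    obtain ⟨⟨hTne, hTcl⟩, r, hrT, hroot⟩ := hT
    have pick1 : ∀ (τ : List ℕ) (x : C), ∃ τ', τ ∈ F → x ∈ U τ →
        τ' ∈ F ∧ τ <+: τ' ∧ x ∈ comp F U τ' := by
      intro τ x
      by_cases hτ : τ ∈ F ∧ x ∈ U τ
      · obtain ⟨hτF, hxU⟩ := hτ
        set S := F.filter (fun σ => τ <+: σ ∧ x ∈ U σ) with hS
        have hSne : S.Nonempty := ⟨τ, by simp [hS, hτF, hxU]⟩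
        obtain ⟨σ, hσS, hmax⟩ := S.exists_max_image (fun l => l.length) hSne
        rw [hS, Finset.mem_filter] at hσS
        refine ⟨σ, fun _ _ => ⟨hσS.1, hσS.2.1, hσS.2.2, ?_⟩⟩
        intro hmem
        simp only [Set.mem_iUnion] at hmem
        obtain ⟨i, hiF, hxUi⟩ := hmem
        have hin : σ ++ [i] ∈ S := by
          rw [hS, Finset.mem_filter]
          exact ⟨hiF, hσS.2.1.trans ⟨[i], rfl⟩, hxUi⟩
        have := hmax _ hin
        simp at this
      · exact ⟨[], fun h1 h2 => absurd ⟨h1, h2⟩ hτ⟩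
    choose g hg using pick1
    have pick0 : ∀ x : C, ∃ τ, τ ∈ F ∧ x ∈ comp F U τ := by
      intro x
      have hx : x ∈ ⋃ τ ∈ F, U τ := by rw [hCov]; trivial
      simp only [Set.mem_iUnion] at hx
      obtain ⟨τ, hτF, hxU⟩ := hx
      obtain ⟨h1, h2, h3⟩ := hg τ x hτF hxU
      exact ⟨g τ x, h1, h3⟩
    choose g0 hg0 using pick0
    set ψ := stmt13psi r.length (g0 (φ r)) (fun τ s => g τ (φ s)) with hψdef
    have hrne : r ≠ [] := hTne r hrT
    have hrpos : 0 < r.length := List.length_pos_iff.mpr hrne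
    have main : ∀ n (s : List ℕ), s ∈ T → s.length = n →
        ψ s ∈ F ∧ φ s ∈ comp F U (ψ s) ∧ ∀ t ∈ T, t <+: s → ψ t <+: ψ s := by
      intro n
      induction n using Nat.strong_induction_on with
      | _ n IH =>
        intro s hsT hslen
        have hrs := hroot s hsT
        by_cases hcase : s.length ≤ r.length
        · have hsr : s = r := (hrs.eq_of_length (le_antisymm hrs.length_le hcase)).symm
          subst hsr
          have hψr : ψ s = g0 (φ s) := by
            rw [hψdef, stmt13psi_eq, if_pos (le_refl _)]
          refine ⟨by rw [hψr]; exact (hg0 (φ s)).1, by rw [hψr]; exact (hg0 (φ s)).2, ?_⟩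
          intro t htT htp
          have : t = s := htp.eq_of_length (le_antisymm htp.length_le (hroot t htT).length_le)
          rw [this]
        · push_neg at hcase
          have hs'pre : s.dropLast <+: s := List.dropLast_prefix s
          have hs'len : s.dropLast.length = s.length - 1 := List.length_dropLast
          have hs'ne : s.dropLast ≠ [] := List.length_pos_iff.mp (by omega)
          have hs'T : s.dropLast ∈ T := hTcl s hsT s.dropLast hs'pre hs'ne
          obtain ⟨ih1, ih2, ih3⟩ := IH s.dropLast.length (by omega) s.dropLast hs'T rfl
          have hφle : φ s.dropLast ≤ φ s := hmono _ hs'T s hsT hs'pre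
          have hU : φ s ∈ U (ψ s.dropLast) := hUp _ ih1 hφle ih2.1
          have hψs : ψ s = g (ψ s.dropLast) (φ s) := by
            rw [hψdef, stmt13psi_eq, if_neg (by omega)]
          obtain ⟨hg1, hg2, hg3⟩ := hg (ψ s.dropLast) (φ s) ih1 hU
          refine ⟨by rw [hψs]; exact hg1, by rw [hψs]; exact hg3, ?_⟩
          intro t htT htp
          by_cases hts : t = s
          · rw [hts]
          · have htlen : t.length < s.length :=
              lt_of_le_of_ne htp.length_le (fun hl => hts (htp.eq_of_length hl))
            have htp' : t <+: s.dropLast :=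
              List.prefix_of_prefix_length_le htp hs'pre (by omega)
            refine (ih3 t htT htp').trans ?_
            rw [hψs]; exact hg2
    refine ⟨ψ, fun s hs => (main s.length s hs rfl).1,
      fun s hs t ht hst => (main t.length t ht rfl).2.2 s hs hst, fun s hs => ?_⟩
    rw [hlab s hs]
    exact hDet (ψ s) (main s.length s hs rfl).1 (φ s) (main s.length s hs rfl).2.1
  · intro h
    by_cases hC : Nonempty C
    case neg =>
      have hCe : IsEmpty C := not_nonempty_iff.mp hC
      refine ⟨fun _ => ∅, fun τ _ => isUpperSet_empty, fun τ _ i _ => subset_rfl, ?_, ?_⟩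
      · have : (Set.univ : Set C) = ∅ := Set.univ_eq_empty_iff.mpr hCe
        rw [this]; simp
      · intro τ _ x _; exact isEmptyElim x
    obtain ⟨e, he⟩ := exists_injective_nat C
    set d : ℕ → C := Function.invFun e with hd0
    have hd : ∀ y, d (e y) = y := fun y => Function.leftInverse_invFun he y
    have hGood : ∀ (x : C) (N : ℕ), ∃ σ ∈ F, stmt13Good e d F cF A x N σ := by
      intro x N
      have htree : IsTree (stmt13T e x N) :=
        ⟨⟨fun s hs => stmt13_ne_nil hs, fun s hs t hts htne => stmt13_prefix_mem hs hts htne⟩,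
          [e x], stmt13_root_mem x N, fun s hs => stmt13_root_prefix hs⟩
      obtain ⟨ψ, hψ1, hψ2, hψ3⟩ := h (stmt13T e x N) (fun s => A (stmt13phi d s)) htree
        ⟨stmt13phi d, fun s hs t ht hst => stmt13_phi_mono he hd hs ht hst, fun s _ => rfl⟩
      exact ⟨ψ [e x], hψ1 _ (stmt13_root_mem x N),
        ⟨ψ, hψ1, hψ2, fun s hs => hψ3 s hs, List.prefix_rfl⟩⟩
    refine ⟨fun τ => {x | ∀ N, stmt13Good e d F cF A x N τ}, ?_, ?_, ?_, ?_⟩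
    · intro τ _ x y hxy hx N
      exact stmt13Good_upper he hd hxy (hx (N + 1))
    · intro τ _ i _ x hx N
      exact stmt13Good_prefix ⟨[i], rfl⟩ (hx N)
    · ext x
      simp only [Set.mem_iUnion, Set.mem_univ, iff_true, Set.mem_setOf_eq]
      choose σ hσF hσG using hGood x
      obtain ⟨τ, hτ⟩ := Finite.exists_infinite_fiber
        (fun N => (⟨σ N, hσF N⟩ : {l // l ∈ F}))
      have hτinf := Set.infinite_coe_iff.mp hτ
      refine ⟨τ.1, τ.2, fun N => ?_⟩
      obtain ⟨M, hM, hNM⟩ := hτinf.exists_gt N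
      have hMτ : σ M = τ.1 := congrArg Subtype.val (Set.mem_singleton_iff.mp hM)
      exact stmt13Good_antitone (le_of_lt hNM) (hMτ ▸ hσG M)
    · intro τ hτ x hx
      obtain ⟨hxU, hxN⟩ := hx
      have hch : ∀ i : ℕ, ∃ Ni, τ ++ [i] ∈ F →
          ¬ stmt13Good e d F cF A x Ni (τ ++ [i]) := by
        intro i
        by_cases hiF : τ ++ [i] ∈ F
        · by_contra hcon
          push_neg at hcon
          refine hxN (Set.mem_iUnion.mpr ⟨i, Set.mem_iUnion.mpr ⟨hiF, ?_⟩⟩)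
          intro N
          exact (hcon N).2
        · exact ⟨0, fun hh => absurd hh hiF⟩
      choose Nf hNf using hch
      have hSfin : {i : ℕ | τ ++ [i] ∈ F}.Finite := by
        have hsub : {i : ℕ | τ ++ [i] ∈ F} ⊆ (fun i => τ ++ [i]) ⁻¹' ↑F := fun i hi => hi
        refine (Set.Finite.preimage ?_ F.finite_toSet).subset hsub
        intro a _ b _ hab
        simpa using hab
      obtain ⟨M, hM⟩ := (hSfin.image Nf).bddAbove
      have hMb : ∀ i, τ ++ [i] ∈ F → Nf i ≤ M :=
        fun i hi => hM (Set.mem_image_of_mem Nf hi)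
      obtain ⟨ψ, hψ1, hψ2, hψ3, hψ4⟩ := hxU M
      have hσF : ψ [e x] ∈ F := hψ1 _ (stmt13_root_mem x M)
      have hts : τ = ψ [e x] := by
        by_contra hne
        obtain ⟨rest, hrest⟩ := hψ4
        cases rest with
        | nil => exact hne (by simpa using hrest)
        | cons i0 rest' =>
          have hpre : τ ++ [i0] <+: ψ [e x] := by
            refine ⟨rest', ?_⟩
            rw [← hrest]; simp
          have hiF : τ ++ [i0] ∈ F := hF.2 _ hσF _ hpre (by simp)
          have hgood : stmt13Good e d F cF A x M (τ ++ [i0]) := ⟨ψ, hψ1, hψ2, hψ3, hpre⟩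
          exact hNf i0 hiF (stmt13Good_antitone (hMb i0 hiF) hgood)
      have hlast := hψ3 [e x] (stmt13_root_mem x M)
      rw [stmt13_phi_root hd] at hlast
      rw [hts]
      exact hlast
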